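/- For a real constant λ > 1 define on ℓ²(ℤ) the operators A^λ = D_{a^λ} and B^λ = U D_{b^λ}, where a^λ(n) = exp(−λⁿ) if n ≥ 1 is even and 1 otherwise, b^λ(n) = exp(−λⁿ) if n ≥ 1 is odd and 1 otherwise. If λ ≠ μ are real constants with λ > 1 and μ > 1, then Hom((H^λ,f^λ),(H^μ,f^μ)) = 0: whenever T₁ and T₂ are bounded operators on ℓ²(ℤ) with T₂ A^λ = A^μ T₁ and T₂ B^λ = B^μ T₁, one has T₁ = T₂ = 0. In particular the transitive Kronecker representations (H^λ,f^λ) = (ℓ²(ℤ), ℓ²(ℤ); A^λ, B^λ), λ > 1, are pairwise non-isomorphic, so there exist continuously many non-isomorphic transitive Hilbert representations of the Kronecker quiver. -/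

import Mathlib

set_option synthInstance.maxHeartbeats 1000000
set_option maxHeartbeats 1000000
noncomputable section
namespace Stmt14Aux
abbrev Hs := lp (fun _ : ℤ => ℂ) 2
def e (n : ℤ) : Hs := lp.single 2 n 1
lemma norm_e (n : ℤ) : ‖e n‖ = 1 := by
  have h : (0:ℝ) < (2 : ENNReal).toReal := by norm_num
  exact (lp.norm_single (p := 2) (E := fun _ : ℤ => ℂ) (by norm_num) n (1:ℂ)).trans norm_one
lemma e_apply_self (n : ℤ) : (e n : ∀ _ : ℤ, ℂ) n = 1 := lp.single_apply_self 2 n 1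
lemma e_apply_ne (n i : ℤ) (h : i ≠ n) : (e n : ∀ _ : ℤ, ℂ) i = 0 := lp.single_apply_ne 2 n 1 h
def eval (i : ℤ) : Hs →L[ℂ] ℂ :=
  LinearMap.mkContinuous
    { toFun := fun f => f i
      map_add' := fun f g => by simp [lp.coeFn_add]
      map_smul' := fun c f => by simp [lp.coeFn_smul] }
    1 (fun f => by rw [one_mul]; exact lp.norm_apply_le_norm (by norm_num) f i)
@[simp] lemma eval_apply (i : ℤ) (f : Hs) : eval i f = f i := rfl
lemma single_eq_smul (n : ℤ) (c : ℂ) : lp.single 2 n c = c • e n := by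
  rw [e, ← lp.single_smul]; norm_num
lemma hasSum_expand (x : Hs) : HasSum (fun n : ℤ => lp.single 2 n (x n)) x :=
  lp.hasSum_single (by norm_num) x

lemma coord_shift (T : Hs →L[ℂ] Hs) (c : ℤ → ℂ) (k : ℤ)
    (hT : ∀ n, T (e n) = c n • e (n + k)) (x : Hs) (i : ℤ) :
    (T x : ∀ _ : ℤ, ℂ) i = c (i - k) * x (i - k) := by
  have h2 : HasSum (fun n : ℤ => eval i (T (lp.single 2 n (x n)))) (eval i (T x)) :=
    ((eval i).comp T).hasSum (hasSum_expand x)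
  have hterm : (fun n : ℤ => eval i (T (lp.single 2 n (x n)))) =
      fun n => if n = i - k then c (i - k) * x (i - k) else 0 := by
    funext n
    rw [single_eq_smul, map_smul, hT, smul_smul, map_smul]
    by_cases hn : n = i - k
    · subst hn
      have : i - k + k = i := by ring
      rw [this]
      simp [e_apply_self, mul_comm]
    · have : i ≠ n + k := fun h => hn (by omega)
      simp [e_apply_ne _ _ this, hn]
  rw [hterm] at h2
  have h3 : HasSum (fun n : ℤ => if n = i - k then c (i - k) * x (i - k) else 0)
      (c (i - k) * x (i - k)) := hasSum_ite_eq (i - k) _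
  have := h2.unique h3
  simpa using this

lemma opzero (T : Hs →L[ℂ] Hs) (h : ∀ n, T (e n) = 0) : T = 0 := by
  refine ContinuousLinearMap.ext fun x => ?_
  have h2 : HasSum (fun n : ℤ => T (lp.single 2 n (x n))) (T x) := T.hasSum (hasSum_expand x)
  have hterm : (fun n : ℤ => T (lp.single 2 n (x n))) = fun _ => 0 := by
    funext n
    rw [single_eq_smul, map_smul, h, smul_zero]
  rw [hterm] at h2
  simpa using h2.unique hasSum_zero

lemma vec_zero (v : Hs) (h : ∀ i : ℤ, (v : ∀ _ : ℤ, ℂ) i = 0) : v = 0 := by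
  apply lp.ext
  funext i
  simpa using h i


def fa (l : ℝ) (n : ℤ) : ℝ := if 1 ≤ n ∧ Even n then -(l ^ n.toNat) else 0
def fb (l : ℝ) (n : ℤ) : ℝ := if 1 ≤ n ∧ Odd n then -(l ^ n.toNat) else 0
def phf (l : ℝ) (n : ℤ) : ℝ := fa l n - fb l n

def Sl (l : ℝ) (M : ℤ) : ℝ := if 1 ≤ M then l * (1 - (-l) ^ M.toNat) / (1 + l) else 0

lemma Sl_diff (l : ℝ) (hl : 0 < l) (M : ℤ) : Sl l M - Sl l (M - 1) = phf l M := by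
  have h1l : (1 : ℝ) + l ≠ 0 := by positivity
  rcases le_or_gt M 0 with hM | hM
  · have h1 : ¬ (1 ≤ M) := by omega
    have h2 : ¬ (1 ≤ M - 1) := by omega
    simp [Sl, phf, fa, fb, h1, h2, show ¬ (1 ≤ M ∧ Even M) by omega,
      show ¬ (1 ≤ M ∧ Odd M) by omega]
  obtain ⟨n, rfl⟩ : ∃ n : ℕ, M = (n : ℤ) + 1 := ⟨(M - 1).toNat, by omega⟩
  have htn : ((n : ℤ) + 1).toNat = n + 1 := by omega
  have hS1 : Sl l ((n : ℤ) + 1) = l * (1 - (-l) ^ (n + 1)) / (1 + l) := by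
    rw [Sl, if_pos (by omega), htn]
  have hS2 : Sl l ((n : ℤ) + 1 - 1) = l * (1 - (-l) ^ n) / (1 + l) := by
    rcases Nat.eq_zero_or_pos n with h0 | h0
    · subst h0; simp [Sl]
    · have htn2 : ((n : ℤ) + 1 - 1).toNat = n := by omega
      rw [Sl, if_pos (by omega), htn2]
  have hdiff : Sl l ((n : ℤ) + 1) - Sl l ((n : ℤ) + 1 - 1) = l * (-l) ^ n := by
    rw [hS1, hS2, pow_succ]
    field_simp
    ring
  rw [hdiff]
  have hcast : ((n : ℤ) + 1) = ((n + 1 : ℕ) : ℤ) := by push_cast; ring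
  have hparE : Even ((n : ℤ) + 1) ↔ Even (n + 1) := by rw [hcast, Int.even_coe_nat]
  rcases Nat.even_or_odd n with he | ho
  · have h1 : ¬ Even ((n : ℤ) + 1) := by
      rw [hparE, Nat.even_add_one]
      exact fun h => h he
    have h2 : Odd ((n : ℤ) + 1) := Int.not_even_iff_odd.mp h1
    have h3 : (-l) ^ n = l ^ n := he.neg_pow l
    rw [h3]
    simp [phf, fa, fb, h1, h2, htn, pow_succ]
    ring
  · have h1 : Even ((n : ℤ) + 1) := by
      rw [hparE, Nat.even_add_one]
      exact Nat.not_even_iff_odd.mpr ho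
    have h2 : ¬ Odd ((n : ℤ) + 1) := Int.not_odd_iff_even.mpr h1
    have h3 : (-l) ^ n = -(l ^ n) := ho.neg_pow l
    rw [h3]
    simp [phf, fa, fb, h1, h2, htn, pow_succ]
    ring

lemma sum_phf (l : ℝ) (hl : 0 < l) (j : ℤ) (N : ℕ) :
    ∑ k ∈ Finset.range N, phf l (j + k) = Sl l (j + N - 1) - Sl l (j - 1) := by
  induction N with
  | zero => simp
  | succ N ih =>
    rw [Finset.sum_range_succ, ih]
    have := Sl_diff l hl (j + N)
    have hc : (j + (N : ℤ) + 1 - 1) = j + (N : ℤ) := by ring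
    have hc2 : (j + ((N : ℕ) + 1 : ℕ) - 1 : ℤ) = j + N := by push_cast; ring
    rw [hc2]
    have := Sl_diff l hl (j + N)
    linarith [Sl_diff l hl (j + N)]

lemma Sl_abs_le (l : ℝ) (hl : 1 ≤ l) (M : ℤ) : |Sl l M| ≤ 2 * l ^ M.toNat := by
  have hl0 : (0:ℝ) < l := by linarith
  have hpow : (1:ℝ) ≤ l ^ M.toNat := one_le_pow₀ hl
  by_cases h : 1 ≤ M
  · rw [Sl, if_pos h, abs_div, abs_mul]
    have h1 : |l| = l := abs_of_pos hl0
    have h2 : |1 + l| = 1 + l := abs_of_pos (by linarith)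
    have h3 : |1 - (-l) ^ M.toNat| ≤ 1 + l ^ M.toNat := by
      calc |1 - (-l) ^ M.toNat| ≤ |(1:ℝ)| + |(-l) ^ M.toNat| := abs_sub _ _
        _ = 1 + l ^ M.toNat := by rw [abs_one, abs_pow, abs_neg, h1]
    rw [h1, h2, div_le_iff₀ (by linarith : (0:ℝ) < 1 + l)]
    nlinarith [abs_nonneg (1 - (-l) ^ M.toNat)]
  · rw [Sl, if_neg h]
    simp only [abs_zero]
    nlinarith

lemma Sl_odd_ge (l : ℝ) (hl : 1 ≤ l) (n : ℕ) (h1 : 1 ≤ n) (h2 : Odd n) :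
    l ^ n / 2 ≤ Sl l (n : ℤ) := by
  have hl0 : (0:ℝ) < l := by linarith
  have htn : ((n : ℤ)).toNat = n := by omega
  rw [Sl, if_pos (by omega : (1:ℤ) ≤ (n:ℤ)), htn, h2.neg_pow]
  rw [le_div_iff₀ (by linarith : (0:ℝ) < 1 + l)]
  have : (1:ℝ) ≤ l ^ n := one_le_pow₀ hl
  nlinarith

lemma Sl_even_ge (l : ℝ) (hl : 1 ≤ l) (n : ℕ) (h1 : 1 ≤ n) (h2 : Even n) :
    l ^ n / 2 - 1 ≤ -Sl l (n : ℤ) := by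
  have hl0 : (0:ℝ) < l := by linarith
  have htn : ((n : ℤ)).toNat = n := by omega
  rw [Sl, if_pos (by omega : (1:ℤ) ≤ (n:ℤ)), htn, h2.neg_pow]
  rw [sub_le_iff_le_add, div_le_iff₀ (by norm_num : (0:ℝ) < 2)]
  have h3 : (1:ℝ) ≤ l ^ n := one_le_pow₀ hl
  have h4 : -(l * (1 - l ^ n) / (1 + l)) = l * (l ^ n - 1) / (1 + l) := by ring
  have h5 : l * (l ^ n - 1) / (1 + l) * (1 + l) = l * (l ^ n - 1) :=
    div_mul_cancel₀ _ (by linarith)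
  nlinarith [h5, mul_le_mul_of_nonneg_right hl (pow_nonneg hl0.le n)]

lemma pow_dominate (p q K R : ℝ) (hp : 1 < p) (hq : 1 < q) (hqp : q < p) :
    ∃ n₀ : ℕ, ∀ n ≥ n₀, R ≤ p ^ n / 2 - K * q ^ n := by
  have h1 : Filter.Tendsto (fun n : ℕ => q ^ n) Filter.atTop Filter.atTop :=
    tendsto_pow_atTop_atTop_of_one_lt hq
  have hpq : 1 < p / q := (one_lt_div (by linarith)).mpr hqp
  have h2 : Filter.Tendsto (fun n : ℕ => (p / q) ^ n / 2 - K) Filter.atTop Filter.atTop := by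
    apply Filter.tendsto_atTop_add_const_right
    exact (tendsto_pow_atTop_atTop_of_one_lt hpq).atTop_div_const (by norm_num)
  have h3 : Filter.Tendsto (fun n : ℕ => q ^ n * ((p / q) ^ n / 2 - K)) Filter.atTop
      Filter.atTop := h1.atTop_mul_atTop₀ h2
  have h4 : (fun n : ℕ => q ^ n * ((p / q) ^ n / 2 - K)) =
      fun n : ℕ => p ^ n / 2 - K * q ^ n := by
    funext n
    have hq0 : q ^ n ≠ 0 := by positivity
    field_simp [div_pow]
    rw [div_pow, mul_sub, mul_div_assoc', mul_comm (q ^ n) (p ^ n), mul_div_assoc, div_self hq0]; ring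
  rw [h4] at h3
  exact Filter.eventually_atTop.mp (h3.eventually_ge_atTop R)

lemma growth (l m : ℝ) (hl : 1 < l) (hm : 1 < m) (hlm : l ≠ m) (i j : ℤ) (R : ℝ) :
    ∃ N : ℕ, R ≤ ∑ k ∈ Finset.range N, (phf l (j + k) - phf m (i + k)) := by
  have hl1 : (1:ℝ) ≤ l := hl.le
  have hm1 : (1:ℝ) ≤ m := hm.le
  have hsum : ∀ N : ℕ, ∑ k ∈ Finset.range N, (phf l (j + k) - phf m (i + k)) =
      (Sl l (j + N - 1) - Sl l (j - 1)) - (Sl m (i + N - 1) - Sl m (i - 1)) := by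
    intro N
    rw [Finset.sum_sub_distrib, sum_phf l (by linarith) j N, sum_phf m (by linarith) i N]
  have hC := abs_nonneg (Sl l (j-1)); have hC2 := abs_nonneg (Sl m (i-1))
  rcases lt_or_gt_of_ne hlm with hcase | hcase
  · -- l < m : dominant is the m-sum, choose even top index for -Sl m
    set K : ℝ := 2 * l ^ ((j - i).toNat) with hK
    obtain ⟨n₀, hn₀⟩ := pow_dominate m l K
      (R + 1 + |Sl l (j-1)| + |Sl m (i-1)|) hm hl hcase
    set n : ℕ := 2 * (n₀ + i.toNat + 1) with hn
    have hne : Even n := ⟨n₀ + i.toNat + 1, by omega⟩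
    have hn1 : 1 ≤ n := by omega
    have hni : i ≤ (n : ℤ) := by omega
    have hn0' : n₀ ≤ n := by omega
    refine ⟨((n : ℤ) - i + 1).toNat, ?_⟩
    have hNc : (((( n : ℤ) - i + 1).toNat : ℤ)) = (n : ℤ) - i + 1 := by omega
    rw [hsum, hNc]
    have hi' : i + ((n : ℤ) - i + 1) - 1 = (n : ℤ) := by ring
    have hj' : j + ((n : ℤ) - i + 1) - 1 = (n : ℤ) + (j - i) := by ring
    rw [hi', hj']
    have hb1 : m ^ n / 2 - 1 ≤ -Sl m (n : ℤ) := Sl_even_ge m hm1 n hn1 hne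
    have hb2 : |Sl l ((n : ℤ) + (j - i))| ≤ 2 * l ^ (((n : ℤ) + (j - i)).toNat) :=
      Sl_abs_le l hl1 _
    have hexp : (((n : ℤ) + (j - i)).toNat) ≤ n + (j - i).toNat := by omega
    have hb3 : l ^ (((n : ℤ) + (j - i)).toNat) ≤ l ^ (n + (j - i).toNat) :=
      pow_le_pow_right₀ hl1 hexp
    have hb4 : (2:ℝ) * l ^ (n + (j - i).toNat) = K * l ^ n := by
      rw [hK, pow_add]; ring
    have hmain := hn₀ n hn0'
    have e1 : -(2 * l ^ (((n : ℤ) + (j - i)).toNat)) ≤ Sl l ((n : ℤ) + (j - i)) :=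
      neg_abs_le _ |>.trans' (by linarith [hb2]) |>.trans (le_refl _) |>.trans (le_refl _)
    have e2 : Sl l ((n : ℤ) + (j - i)) ≥ -(K * l ^ n) := by
      have := neg_abs_le (Sl l ((n : ℤ) + (j - i)))
      nlinarith [hb2, hb3]
    have e3 : Sl l (j - 1) ≤ |Sl l (j-1)| := le_abs_self _
    have e4 : -|Sl m (i-1)| ≤ Sl m (i - 1) := neg_abs_le _
    nlinarith [e2, hb1, hmain]
  · -- m < l : dominant is the l-sum, choose odd top index for Sl l
    set K : ℝ := 2 * m ^ ((i - j).toNat) with hK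
    obtain ⟨n₀, hn₀⟩ := pow_dominate l m K
      (R + 1 + |Sl l (j-1)| + |Sl m (i-1)|) hl hm hcase
    set n : ℕ := 2 * (n₀ + j.toNat + 1) + 1 with hn
    have hno : Odd n := ⟨n₀ + j.toNat + 1, by omega⟩
    have hn1 : 1 ≤ n := by omega
    have hnj : j ≤ (n : ℤ) := by omega
    have hn0' : n₀ ≤ n := by omega
    refine ⟨((n : ℤ) - j + 1).toNat, ?_⟩
    have hNc : (((( n : ℤ) - j + 1).toNat : ℤ)) = (n : ℤ) - j + 1 := by omega
    rw [hsum, hNc]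
    have hj' : j + ((n : ℤ) - j + 1) - 1 = (n : ℤ) := by ring
    have hi' : i + ((n : ℤ) - j + 1) - 1 = (n : ℤ) + (i - j) := by ring
    rw [hi', hj']
    have hb1 : l ^ n / 2 ≤ Sl l (n : ℤ) := Sl_odd_ge l hl1 n hn1 hno
    have hb2 : |Sl m ((n : ℤ) + (i - j))| ≤ 2 * m ^ (((n : ℤ) + (i - j)).toNat) :=
      Sl_abs_le m hm1 _
    have hexp : (((n : ℤ) + (i - j)).toNat) ≤ n + (i - j).toNat := by omega
    have hb3 : m ^ (((n : ℤ) + (i - j)).toNat) ≤ m ^ (n + (i - j).toNat) :=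
      pow_le_pow_right₀ hm1 hexp
    have hb4 : (2:ℝ) * m ^ (n + (i - j).toNat) = K * m ^ n := by
      rw [hK, pow_add]; ring
    have hmain := hn₀ n hn0'
    have e2 : Sl m ((n : ℤ) + (i - j)) ≤ K * m ^ n := by
      have := le_abs_self (Sl m ((n : ℤ) + (i - j)))
      nlinarith [hb2, hb3]
    nlinarith [e2, hb1, hmain, le_abs_self (Sl l (j-1)), neg_abs_le (Sl l (j-1)),
      le_abs_self (Sl m (i-1)), neg_abs_le (Sl m (i-1))]

end Stmt14Aux

open Stmt14Aux in
/-- **Continuously many non-isomorphic transitive Kronecker representations.**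
For a real constant `λ > 1` let `A^λ = D_{a^λ}` and `B^λ = U D_{b^λ}` on `ℓ²(ℤ)`, where
`a^λ(n) = exp(-λⁿ)` for even `n ≥ 1` and `1` otherwise, and `b^λ(n) = exp(-λⁿ)` for odd
`n ≥ 1` and `1` otherwise.  If `λ ≠ μ` with `λ, μ > 1`, then every homomorphism
`(T₁,T₂)` from `(H^λ,f^λ)` to `(H^μ,f^μ)` (i.e. `T₂ A^λ = A^μ T₁`, `T₂ B^λ = B^μ T₁`)
is zero; in particular the two representations are not isomorphic. -/
theorem stmt_14 (l m : ℝ) (hl : 1 < l) (hm : 1 < m) (hlm : l ≠ m)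
    (Al Bl Am Bm : lp (fun _ : ℤ => ℂ) 2 →L[ℂ] lp (fun _ : ℤ => ℂ) 2)
    (hAl : ∀ n : ℤ, Al (lp.single 2 n (1 : ℂ)) =
      (if 1 ≤ n ∧ Even n then (Real.exp (-(l ^ n.toNat)) : ℂ) else 1) •
        lp.single 2 n (1 : ℂ))
    (hBl : ∀ n : ℤ, Bl (lp.single 2 n (1 : ℂ)) =
      (if 1 ≤ n ∧ Odd n then (Real.exp (-(l ^ n.toNat)) : ℂ) else 1) •
        lp.single 2 (n + 1) (1 : ℂ))
    (hAm : ∀ n : ℤ, Am (lp.single 2 n (1 : ℂ)) =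
      (if 1 ≤ n ∧ Even n then (Real.exp (-(m ^ n.toNat)) : ℂ) else 1) •
        lp.single 2 n (1 : ℂ))
    (hBm : ∀ n : ℤ, Bm (lp.single 2 n (1 : ℂ)) =
      (if 1 ≤ n ∧ Odd n then (Real.exp (-(m ^ n.toNat)) : ℂ) else 1) •
        lp.single 2 (n + 1) (1 : ℂ)) :
    (∀ T₁ T₂ : lp (fun _ : ℤ => ℂ) 2 →L[ℂ] lp (fun _ : ℤ => ℂ) 2,
      T₂ ∘L Al = Am ∘L T₁ → T₂ ∘L Bl = Bm ∘L T₁ → T₁ = 0 ∧ T₂ = 0)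
    ∧
    ¬ ∃ φ₁ φ₂ : lp (fun _ : ℤ => ℂ) 2 →L[ℂ] lp (fun _ : ℤ => ℂ) 2,
      IsUnit φ₁ ∧ IsUnit φ₂ ∧ φ₂ ∘L Al = Am ∘L φ₁ ∧ φ₂ ∘L Bl = Bm ∘L φ₁ := by
  -- rewrite the defining hypotheses into exponential form
  have coefA : ∀ (p : ℝ) (n : ℤ),
      (if 1 ≤ n ∧ Even n then ((Real.exp (-(p ^ n.toNat)) : ℝ) : ℂ) else 1)
        = ((Real.exp (fa p n) : ℝ) : ℂ) := by
    intro p n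
    by_cases h : 1 ≤ n ∧ Even n
    · simp [fa, h]
    · simp [fa, h, Real.exp_zero]
  have coefB : ∀ (p : ℝ) (n : ℤ),
      (if 1 ≤ n ∧ Odd n then ((Real.exp (-(p ^ n.toNat)) : ℝ) : ℂ) else 1)
        = ((Real.exp (fb p n) : ℝ) : ℂ) := by
    intro p n
    by_cases h : 1 ≤ n ∧ Odd n
    · simp [fb, h]
    · simp [fb, h, Real.exp_zero]
  have hAl' : ∀ n : ℤ, Al (e n) = ((Real.exp (fa l n) : ℝ) : ℂ) • e (n + 0) := by
    intro n; rw [e, hAl n, coefA]; norm_num [e]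
  have hBl' : ∀ n : ℤ, Bl (e n) = ((Real.exp (fb l n) : ℝ) : ℂ) • e (n + 1) := by
    intro n; rw [e, hBl n, coefB]; norm_num [e]
  have hAm' : ∀ n : ℤ, Am (e n) = ((Real.exp (fa m n) : ℝ) : ℂ) • e (n + 0) := by
    intro n; rw [e, hAm n, coefA]; norm_num [e]
  have hBm' : ∀ n : ℤ, Bm (e n) = ((Real.exp (fb m n) : ℝ) : ℂ) • e (n + 1) := by
    intro n; rw [e, hBm n, coefB]; norm_num [e]
  have main : ∀ T₁ T₂ : lp (fun _ : ℤ => ℂ) 2 →L[ℂ] lp (fun _ : ℤ => ℂ) 2,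
      T₂ ∘L Al = Am ∘L T₁ → T₂ ∘L Bl = Bm ∘L T₁ → T₁ = 0 ∧ T₂ = 0 := by
    intro T₁ T₂ h1 h2
    have h1' : ∀ x : Hs, T₂ (Al x) = Am (T₁ x) := fun x => by
      have := ContinuousLinearMap.ext_iff.mp h1 x
      simpa using this
    have h2' : ∀ x : Hs, T₂ (Bl x) = Bm (T₁ x) := fun x => by
      have := ContinuousLinearMap.ext_iff.mp h2 x
      simpa using this
    -- entry relations
    have R1 : ∀ i j : ℤ, ((Real.exp (fa l j) : ℝ) : ℂ) * eval i (T₂ (e j))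
        = ((Real.exp (fa m i) : ℝ) : ℂ) * eval i (T₁ (e j)) := by
      intro i j
      have lhs : T₂ (Al (e j)) = ((Real.exp (fa l j) : ℝ) : ℂ) • T₂ (e j) := by
        rw [hAl' j, map_smul]; norm_num
      have rhs : eval i (Am (T₁ (e j)))
          = ((Real.exp (fa m i) : ℝ) : ℂ) * eval i (T₁ (e j)) := by
        have := coord_shift Am (fun n => ((Real.exp (fa m n) : ℝ) : ℂ)) 0 hAm' (T₁ (e j)) i
        simpa using this
      have := congrArg (eval i) (h1' (e j))
      rw [lhs, map_smul, smul_eq_mul] at this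
      rw [this, rhs]
    have R2 : ∀ i j : ℤ, ((Real.exp (fb l j) : ℝ) : ℂ) * eval i (T₂ (e (j + 1)))
        = ((Real.exp (fb m (i - 1)) : ℝ) : ℂ) * eval (i - 1) (T₁ (e j)) := by
      intro i j
      have lhs : T₂ (Bl (e j)) = ((Real.exp (fb l j) : ℝ) : ℂ) • T₂ (e (j + 1)) := by
        rw [hBl' j, map_smul]
      have rhs : eval i (Bm (T₁ (e j)))
          = ((Real.exp (fb m (i - 1)) : ℝ) : ℂ) * eval (i - 1) (T₁ (e j)) := by
        have := coord_shift Bm (fun n => ((Real.exp (fb m n) : ℝ) : ℂ)) 1 hBm' (T₁ (e j)) i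
        simpa using this
      have := congrArg (eval i) (h2' (e j))
      rw [lhs, map_smul, smul_eq_mul] at this
      rw [this, rhs]
    -- one-step recursion for the entries of T₂
    have hrec : ∀ i j : ℤ, eval (i + 1) (T₂ (e (j + 1)))
        = ((Real.exp (phf l j - phf m i) : ℝ) : ℂ) * eval i (T₂ (e j)) := by
      intro i j
      have hR2 := R2 (i + 1) j
      simp only [add_sub_cancel_right] at hR2
      have hR1 := R1 i j
      have hne1 : ((Real.exp (fb l j) : ℝ) : ℂ) ≠ 0 :=
        Complex.ofReal_ne_zero.mpr (Real.exp_ne_zero _)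
      have hne2 : ((Real.exp (fa m i) : ℝ) : ℂ) ≠ 0 :=
        Complex.ofReal_ne_zero.mpr (Real.exp_ne_zero _)
      apply mul_left_cancel₀ (mul_ne_zero hne2 hne1)
      have expand : ∀ a b : ℝ, ((Real.exp a : ℝ) : ℂ) * ((Real.exp b : ℝ) : ℂ)
          = ((Real.exp (a + b) : ℝ) : ℂ) := by
        intro a b
        rw [← Complex.ofReal_mul, ← Real.exp_add]
      calc ((Real.exp (fa m i) : ℝ) : ℂ) * ((Real.exp (fb l j) : ℝ) : ℂ)
            * eval (i + 1) (T₂ (e (j + 1)))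
          = ((Real.exp (fa m i) : ℝ) : ℂ)
              * (((Real.exp (fb l j) : ℝ) : ℂ) * eval (i + 1) (T₂ (e (j + 1)))) := by ring
        _ = ((Real.exp (fa m i) : ℝ) : ℂ)
              * (((Real.exp (fb m i) : ℝ) : ℂ) * eval i (T₁ (e j))) := by rw [hR2]
        _ = ((Real.exp (fb m i) : ℝ) : ℂ)
              * (((Real.exp (fa m i) : ℝ) : ℂ) * eval i (T₁ (e j))) := by ring
        _ = ((Real.exp (fb m i) : ℝ) : ℂ)
              * (((Real.exp (fa l j) : ℝ) : ℂ) * eval i (T₂ (e j))) := by rw [← hR1]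
        _ = ((Real.exp (fa m i) : ℝ) : ℂ) * ((Real.exp (fb l j) : ℝ) : ℂ)
              * (((Real.exp (phf l j - phf m i) : ℝ) : ℂ) * eval i (T₂ (e j))) := by
            have harg : fb m i + fa l j
                = fa m i + fb l j + (phf l j - phf m i) := by
              simp [phf]; ring
            have scal : ((Real.exp (fb m i) : ℝ) : ℂ) * ((Real.exp (fa l j) : ℝ) : ℂ)
                = ((Real.exp (fa m i) : ℝ) : ℂ) * ((Real.exp (fb l j) : ℝ) : ℂ)
                    * ((Real.exp (phf l j - phf m i) : ℝ) : ℂ) := by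
              rw [expand, expand, expand, harg]
            rw [← mul_assoc, scal]
            ring
    -- iterate the recursion
    have hind : ∀ (i j : ℤ) (N : ℕ), ‖eval (i + N) (T₂ (e (j + N)))‖
        = Real.exp (∑ k ∈ Finset.range N, (phf l (j + k) - phf m (i + k)))
            * ‖eval i (T₂ (e j))‖ := by
      intro i j N
      induction N with
      | zero => simp
      | succ N ih =>
        have hc : (i + ((N : ℕ) + 1 : ℕ) : ℤ) = (i + N) + 1 := by push_cast; ring
        have hc2 : (j + ((N : ℕ) + 1 : ℕ) : ℤ) = (j + N) + 1 := by push_cast; ring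
        rw [hc, hc2, hrec (i + N) (j + N), norm_mul, Finset.sum_range_succ]
        rw [Complex.norm_of_nonneg (Real.exp_pos _).le, ih, Real.exp_add]
        ring
    -- entries are bounded by the operator norm
    have hbd : ∀ i j : ℤ, ‖eval i (T₂ (e j))‖ ≤ ‖T₂‖ := by
      intro i j
      have h1 : ‖eval i (T₂ (e j))‖ = ‖(T₂ (e j) : ∀ _ : ℤ, ℂ) i‖ := by
        rfl
      rw [h1]
      calc ‖(T₂ (e j) : ∀ _ : ℤ, ℂ) i‖ ≤ ‖T₂ (e j)‖ :=
            lp.norm_apply_le_norm (by norm_num) _ i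
        _ ≤ ‖T₂‖ * ‖e j‖ := T₂.le_opNorm _
        _ = ‖T₂‖ := by rw [norm_e, mul_one]
    -- entries of T₂ vanish
    have hs0 : ∀ i j : ℤ, eval i (T₂ (e j)) = 0 := by
      intro i j
      by_contra hne
      set a := ‖eval i (T₂ (e j))‖ with ha
      have ha0 : 0 < a := norm_pos_iff.mpr hne
      have hbound : ∀ N : ℕ,
          Real.exp (∑ k ∈ Finset.range N, (phf l (j + k) - phf m (i + k))) * a ≤ ‖T₂‖ := by
        intro N
        rw [← hind i j N]
        exact hbd _ _
      obtain ⟨N, hN⟩ := growth l m hl hm hlm i j (Real.log (‖T₂‖ / a) + 1)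
      have haT : a ≤ ‖T₂‖ := ha ▸ hbd i j
      have hTa : 0 < ‖T₂‖ / a := div_pos (lt_of_lt_of_le ha0 haT) ha0
      have hexp : ‖T₂‖ / a < Real.exp (∑ k ∈ Finset.range N, (phf l (j + k) - phf m (i + k))) := by
        calc ‖T₂‖ / a < Real.exp (Real.log (‖T₂‖ / a) + 1) := by
              rw [Real.exp_add, Real.exp_log hTa]
              nlinarith [Real.exp_one_gt_d9, hTa]
          _ ≤ _ := Real.exp_le_exp.mpr hN
      have hb := hbound N
      nlinarith [hb, hexp, ha0, div_mul_cancel₀ ‖T₂‖ (ne_of_gt ha0)]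
    have hT2 : T₂ = 0 := by
      apply opzero
      intro n
      apply vec_zero
      intro i
      exact hs0 i n
    have ht0 : ∀ i j : ℤ, eval i (T₁ (e j)) = 0 := by
      intro i j
      have := R1 i j
      rw [hs0 i j, mul_zero] at this
      have hne : ((Real.exp (fa m i) : ℝ) : ℂ) ≠ 0 :=
        Complex.ofReal_ne_zero.mpr (Real.exp_ne_zero _)
      exact (mul_eq_zero.mp this.symm).resolve_left hne
    have hT1 : T₁ = 0 := by
      apply opzero
      intro n
      apply vec_zero
      intro i
      exact ht0 i n
    exact ⟨hT1, hT2⟩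
  refine ⟨main, ?_⟩
  rintro ⟨φ₁, φ₂, hu1, hu2, hc1, hc2⟩
  obtain ⟨hphi1, -⟩ := main φ₁ φ₂ hc1 hc2
  rw [hphi1] at hu1
  obtain ⟨u, hu⟩ := hu1
  have h10 : (1 : Hs →L[ℂ] Hs) = 0 := by
    calc (1 : Hs →L[ℂ] Hs) = ↑u⁻¹ * ↑u := (u.inv_mul).symm
      _ = ↑u⁻¹ * 0 := by rw [hu]
      _ = 0 := by rw [mul_zero]
  have he0 : e 0 = 0 := by
    have := congrArg (fun T : Hs →L[ℂ] Hs => T (e 0)) h10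
    simpa using this
  have := norm_e 0
  rw [he0] at this
  simp at this
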